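/- Let k ≥ 1, let R₁ and R₂ be symmetric positive definite k×k real matrices, let a, b ≥ 0 be real numbers, and set R = aR₁ + bR₂. Then for all vectors x, y ∈ ℝᵏ one has xᵀR R₁⁻¹R₂ x + yᵀR R₂⁻¹R₁ y ≥ xᵀR y + yᵀR x. -/

import Mathlib

open Matrix

lemma aux_expand {k : ℕ} (M N : Matrix (Fin k) (Fin k) ℝ)
    (hM : M.IsSymm) (hN : N.IsSymm) (hMinv : M * M⁻¹ = 1)
    (x y : Fin k → ℝ) :
    (x - (M⁻¹ * N) *ᵥ y) ⬝ᵥ (M *ᵥ (x - (M⁻¹ * N) *ᵥ y)) =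
      x ⬝ᵥ (M *ᵥ x) - x ⬝ᵥ (N *ᵥ y) - y ⬝ᵥ (N *ᵥ x) +
        y ⬝ᵥ ((N * M⁻¹ * N) *ᵥ y) := by
  have hMN : M *ᵥ ((M⁻¹ * N) *ᵥ y) = N *ᵥ y := by
    rw [mulVec_mulVec, ← Matrix.mul_assoc, hMinv, Matrix.one_mul]
  have hswap : ∀ u v : Fin k → ℝ, u ⬝ᵥ (N *ᵥ v) = v ⬝ᵥ (N *ᵥ u) := by
    intro u v
    rw [dotProduct_mulVec, ← mulVec_transpose, hN.eq, dotProduct_comm]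
  have hMinvsymm : (M⁻¹)ᵀ = M⁻¹ := by
    rw [Matrix.transpose_nonsing_inv, hM.eq]
  have h3 : ((M⁻¹ * N) *ᵥ y) ⬝ᵥ (N *ᵥ y) = y ⬝ᵥ ((N * M⁻¹ * N) *ᵥ y) := by
    rw [dotProduct_mulVec, ← mulVec_transpose, hN.eq, mulVec_mulVec,
      ← Matrix.mul_assoc, dotProduct_comm]
  have h4 : ((M⁻¹ * N) *ᵥ y) ⬝ᵥ (M *ᵥ x) = y ⬝ᵥ (N *ᵥ x) := by
    rw [dotProduct_mulVec, ← mulVec_transpose, hM.eq, mulVec_mulVec,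
      ← Matrix.mul_assoc, hMinv, Matrix.one_mul, dotProduct_comm, hswap x y]
  rw [mulVec_sub, hMN, sub_dotProduct, dotProduct_sub, dotProduct_sub, h3, h4]
  ring

/-- For symmetric positive definite matrices `R₁, R₂`, nonnegative reals `a, b`, and
`R = aR₁ + bR₂`, one has `xᵀRR₁⁻¹R₂x + yᵀRR₂⁻¹R₁y ≥ xᵀRy + yᵀRx` for all vectors. -/
theorem stmt_1 (k : ℕ) (hk : 1 ≤ k) (R₁ R₂ : Matrix (Fin k) (Fin k) ℝ)
    (hR₁symm : R₁.IsSymm) (hR₂symm : R₂.IsSymm)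
    (hR₁ : R₁.PosDef) (hR₂ : R₂.PosDef)
    (a b : ℝ) (ha : 0 ≤ a) (hb : 0 ≤ b) (R : Matrix (Fin k) (Fin k) ℝ)
    (hR : R = a • R₁ + b • R₂) :
    ∀ x y : Fin k → ℝ,
      x ⬝ᵥ (R *ᵥ y) + y ⬝ᵥ (R *ᵥ x) ≤
        x ⬝ᵥ ((R * R₁⁻¹ * R₂) *ᵥ x) + y ⬝ᵥ ((R * R₂⁻¹ * R₁) *ᵥ y) := by
  intro x y
  have h1inv : R₁ * R₁⁻¹ = 1 := Matrix.mul_nonsing_inv _ hR₁.det_pos.ne'.isUnit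
  have h2inv : R₂ * R₂⁻¹ = 1 := Matrix.mul_nonsing_inv _ hR₂.det_pos.ne'.isUnit
  -- the two nonnegative quadratic forms
  set u : Fin k → ℝ := x - (R₂⁻¹ * R₁) *ᵥ y with hu
  set v : Fin k → ℝ := y - (R₁⁻¹ * R₂) *ᵥ x with hv
  have hu0 : 0 ≤ u ⬝ᵥ (R₂ *ᵥ u) := by
    have := hR₂.posSemidef.dotProduct_mulVec_nonneg u
    simpa using this
  have hv0 : 0 ≤ v ⬝ᵥ (R₁ *ᵥ v) := by
    have := hR₁.posSemidef.dotProduct_mulVec_nonneg v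
    simpa using this
  have hue := aux_expand R₂ R₁ hR₂symm hR₁symm h2inv x y
  have hve := aux_expand R₁ R₂ hR₁symm hR₂symm h1inv y x
  rw [← hu] at hue
  rw [← hv] at hve
  -- expand the R-terms
  subst hR
  have e1 : ((a • R₁ + b • R₂) * R₁⁻¹ * R₂) = a • R₂ + b • (R₂ * R₁⁻¹ * R₂) := by
    rw [Matrix.add_mul, Matrix.add_mul, Matrix.smul_mul, Matrix.smul_mul,
      Matrix.smul_mul, Matrix.smul_mul, h1inv]
    simp [Matrix.mul_assoc]
  have e2 : ((a • R₁ + b • R₂) * R₂⁻¹ * R₁) = a • (R₁ * R₂⁻¹ * R₁) + b • R₁ := by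
    rw [Matrix.add_mul, Matrix.add_mul, Matrix.smul_mul, Matrix.smul_mul,
      Matrix.smul_mul, Matrix.smul_mul, h2inv]
    simp [Matrix.mul_assoc]
  rw [e1, e2]
  simp only [add_mulVec, smul_mulVec, dotProduct_add, dotProduct_smul, smul_eq_mul]
  nlinarith [mul_nonneg ha hu0, mul_nonneg hb hv0, hue, hve]
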